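/- Let G be a connected graph and v a vertex such that either G − v has at least 3 connected components, or G − v has exactly 2 connected components neither of which is a path. Then v is contained in every connected forcing set of G. -/

import Mathlib

open SimpleGraph

/-- A vertex is (eventually) colored in the forcing process starting from `S`:
either it is in `S`, or some colored vertex `u` adjacent to it has all of its
other neighbors colored, so `u` forces it. -/
inductive SimpleGraph.Forced {V : Type*} (G : SimpleGraph V) (S : Set V) : V → Prop
  | init {v : V} (hv : v ∈ S) : G.Forced S v
  | force {u w : V} (hu : G.Forced S u) (hadj : G.Adj u w)
      (hothers : ∀ x, G.Adj u x → x ≠ w → G.Forced S x) : G.Forced S w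

/-- `S` is a (zero) forcing set of `G`. -/
def SimpleGraph.IsForcingSet {V : Type*} (G : SimpleGraph V) (S : Set V) : Prop :=
  ∀ v, G.Forced S v

/-- `S` is a connected forcing set of `G`. -/
def SimpleGraph.IsConnForcingSet {V : Type*} (G : SimpleGraph V) (S : Set V) : Prop :=
  G.IsForcingSet S ∧ (G.induce S).Connected

/-- The (zero) forcing number `F(G)`. -/
noncomputable def SimpleGraph.zfNum {V : Type*} (G : SimpleGraph V) : ℕ :=
  sInf {n | ∃ S : Set V, S.ncard = n ∧ G.IsForcingSet S}

/-- The connected forcing number `F_c(G)`. -/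
noncomputable def SimpleGraph.czfNum {V : Type*} (G : SimpleGraph V) : ℕ :=
  sInf {n | ∃ S : Set V, S.ncard = n ∧ G.IsConnForcingSet S}

/-- `G` is a path graph. -/
def SimpleGraph.IsPathGraph {V : Type*} (G : SimpleGraph V) : Prop :=
  ∃ n : ℕ, Nonempty (G ≃g SimpleGraph.pathGraph n)

/-- Deletion of a vertex. -/
def SimpleGraph.delVert {V : Type*} (G : SimpleGraph V) (v : V) :
    SimpleGraph {w : V // w ≠ v} :=
  G.induce {w : V | w ≠ v}

/-- `v` is a leaf (degree-1 vertex) of `G`. -/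
def SimpleGraph.IsLeaf {V : Type*} (G : SimpleGraph V) (v : V) : Prop :=
  (G.neighborSet v).ncard = 1

section Aux

universe u
variable {V : Type u} {G : SimpleGraph V}

lemma SimpleGraph.Forced.nonempty {S : Set V} {x : V} (h : G.Forced S x) : S.Nonempty := by
  induction h with
  | init hv => exact ⟨_, hv⟩
  | force hu hadj hoth ihu ihoth => exact ihu

lemma forced_singleton_unique_nbr {w a b : V}
    (hf : ∀ x, G.Forced {w} x) (ha : G.Adj w a) (hb : G.Adj w b) : a = b := by
  by_contra hab
  have key : ∀ z, G.Forced {w} z → z = w := by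
    intro z hz
    induction hz with
    | init hv => exact hv
    | @force u z hu hadj hoth ihu ihoth =>
      subst ihu
      rcases ne_or_eq a z with hne | heq
      · exact absurd (ihoth a ha hne) ha.ne'
      · exact absurd (ihoth b hb (fun h => hab (heq.trans h.symm))) hb.ne'
  exact absurd (key a (hf a)) ha.ne'

lemma forced_singleton_exists_nbr {w y : V} (hf : ∀ x, G.Forced {w} x) (hne : y ≠ w) :
    ∃ x, G.Adj w x := by
  by_contra hno
  push_neg at hno
  have key : ∀ z, G.Forced {w} z → z = w := by
    intro z hz
    induction hz with
    | init hv => exact hv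
    | @force u z hu hadj hoth ihu ihoth =>
      subst ihu
      exact absurd hadj (hno _)
  exact hne (key y (hf y))

lemma forced_delete {w x : V} (hadj : G.Adj w x)
    (huniq : ∀ a, G.Adj w a → a = x) {y : V} (hy : G.Forced {w} y) :
    ∀ hyw : y ≠ w,
      (G.induce {z | z ≠ w}).Forced {⟨x, hadj.ne.symm⟩} ⟨y, hyw⟩ := by
  induction hy with
  | init hv => exact fun hyw => absurd hv hyw
  | @force u y hu hadju hoth ihu ihoth =>
    intro hyw
    by_cases huw : u = w
    · subst huw
      have hyx : y = x := huniq y hadju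
      subst hyx
      exact Forced.init rfl
    · refine Forced.force (u := ⟨u, huw⟩) (ihu huw) (by exact hadju) ?_
      intro z hz hne
      exact ihoth z.val (by exact hz) (fun h => hne (Subtype.ext h)) z.prop

lemma path_of_forced_singleton : ∀ (n : ℕ) (V' : Type u) (H : SimpleGraph V') [Fintype V'] (w : V'),
    Fintype.card V' = n → (∀ x, H.Forced {w} x) →
    ∃ e : H ≃g pathGraph n, ∀ h0 : 0 < n, e w = ⟨0, h0⟩ := by
  intro n
  induction n with
  | zero =>
    intro V' H _ w hcard hf
    exact ((Fintype.card_eq_zero_iff.mp hcard).false w).elim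
  | succ n ih =>
    intro V' H _ w hcard hf
    classical
    rcases Nat.eq_zero_or_pos n with hn0 | hnpos
    · subst hn0
      have hsub : ∀ z : V', z = w := fun z =>
        Fintype.card_le_one_iff.mp (le_of_eq hcard) z w
      refine ⟨⟨Fintype.equivFinOfCardEq hcard, ?_⟩,
        fun h0 => Subsingleton.elim (α := Fin 1) _ _⟩
      intro a b
      have hab : a = b := (hsub a).trans (hsub b).symm
      subst hab
      simp
    · have hnt : Nontrivial V' := Fintype.one_lt_card_iff_nontrivial.mp (by omega)
      obtain ⟨y, hyw⟩ := exists_ne w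
      obtain ⟨x, hwx⟩ := forced_singleton_exists_nbr hf hyw
      have huniq : ∀ a, H.Adj w a → a = x := fun a haa =>
        forced_singleton_unique_nbr hf haa hwx
      haveI : Fintype ({z : V' | z ≠ w} : Set V') := Fintype.ofFinite _
      have hcard' : Fintype.card ({z : V' | z ≠ w} : Set V') = n := by
        have h1 : Fintype.card {z : V' // ¬ z = w}
            = Fintype.card V' - Fintype.card {z : V' // z = w} :=
          Fintype.card_subtype_compl _
        rw [Fintype.card_subtype_eq] at h1
        have h2 : Fintype.card ({z : V' | z ≠ w} : Set V')
            = Fintype.card {z : V' // ¬ z = w} :=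
          Fintype.card_congr (Equiv.subtypeEquivRight (fun _ => Iff.rfl))
        omega
      have hxs : x ∈ ({z : V' | z ≠ w} : Set V') := hwx.ne.symm
      have hf' : ∀ z : ({z : V' | z ≠ w} : Set V'),
          (H.induce {z : V' | z ≠ w}).Forced {⟨x, hxs⟩} z := fun z =>
        forced_delete hwx huniq (hf z.val) z.prop
      obtain ⟨e', he'⟩ := ih _ (H.induce {z : V' | z ≠ w}) ⟨x, hxs⟩ hcard' hf'
      have he'x : e' ⟨x, hxs⟩ = ⟨0, hnpos⟩ := he' hnpos
      refine ⟨⟨⟨fun z => if hz : z = w then (0 : Fin (n+1)) else (e' ⟨z, hz⟩).succ,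
               fun i => Fin.cases w (fun j => (e'.symm j).val) i, ?_, ?_⟩, ?_⟩, ?_⟩
      · intro z
        by_cases hz : z = w
        · subst hz; simp
        · simp only [dif_neg hz, Fin.cases_succ, RelIso.symm_apply_apply]
      · intro i
        refine Fin.cases ?_ (fun j => ?_) i
        · simp
        · simp only [Fin.cases_succ]
          refine (dif_neg (e'.symm j).prop).trans ?_
          have : (⟨(e'.symm j).val, (e'.symm j).prop⟩ :
              ({z : V' | z ≠ w} : Set V')) = e'.symm j := rfl
          rw [this, RelIso.apply_symm_apply]
      · have hv0 : ((⟨0, hnpos⟩ : Fin n) : ℕ) = 0 := rfl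
        intro a b
        by_cases ha : a = w <;> by_cases hb : b = w
        · rw [ha, hb]; simp
        · rw [ha]
          simp only [Equiv.coe_fn_mk, dif_pos rfl, dite_true, dif_neg hb, pathGraph_adj,
            Fin.val_succ, Fin.val_zero]
          constructor
          · rintro (h | h)
            · have h0 : (e' ⟨b, hb⟩ : Fin n) = ⟨0, hnpos⟩ := by
                apply Fin.ext
                omega
              have hbx : (⟨b, hb⟩ : ({z : V' | z ≠ w} : Set V')) = ⟨x, hxs⟩ :=
                e'.injective (h0.trans he'x.symm)
              have hbx' : b = x := congrArg Subtype.val hbx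
              rw [hbx']; exact hwx
            · omega
          · intro hab
            left
            have hbx : b = x := huniq b hab
            have h0 : e' ⟨b, hb⟩ = ⟨0, hnpos⟩ := by
              rw [show (⟨b, hb⟩ : ({z : V' | z ≠ w} : Set V')) = ⟨x, hxs⟩ from
                Subtype.ext hbx]
              exact he'x
            rw [h0]
        · rw [hb]
          simp only [Equiv.coe_fn_mk, dif_pos rfl, dite_true, dif_neg ha, pathGraph_adj,
            Fin.val_succ, Fin.val_zero]
          rw [SimpleGraph.adj_comm]
          constructor
          · rintro (h | h)
            · omega
            · have h0 : (e' ⟨a, ha⟩ : Fin n) = ⟨0, hnpos⟩ := by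
                apply Fin.ext
                omega
              have hax : (⟨a, ha⟩ : ({z : V' | z ≠ w} : Set V')) = ⟨x, hxs⟩ :=
                e'.injective (h0.trans he'x.symm)
              have hax' : a = x := congrArg Subtype.val hax
              rw [hax']; exact hwx
          · intro hab
            right
            have hax : a = x := huniq a hab
            have h0 : e' ⟨a, ha⟩ = ⟨0, hnpos⟩ := by
              rw [show (⟨a, ha⟩ : ({z : V' | z ≠ w} : Set V')) = ⟨x, hxs⟩ from
                Subtype.ext hax]
              exact he'x
            rw [h0]
        · simp only [Equiv.coe_fn_mk, dif_neg ha, dif_neg hb, pathGraph_adj,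
            Fin.val_succ]
          have hm : (pathGraph n).Adj (e' ⟨a, ha⟩) (e' ⟨b, hb⟩) ↔ H.Adj a b :=
            e'.map_rel_iff
          rw [← hm, pathGraph_adj]
          omega
      · intro h0
        exact dif_pos rfl

lemma exists_adj_supp (hG : G.Connected) (v : V)
    (c : (G.delVert v).ConnectedComponent) :
    ∃ x : {w : V // w ≠ v}, x ∈ c.supp ∧ G.Adj v x.val := by
  obtain ⟨y, hy⟩ := c.exists_rep
  obtain ⟨p⟩ := hG.preconnected y.val v
  have key : ∀ (k : ℕ) (a : V) (p : G.Walk a v), p.length = k → ∀ ha : a ≠ v,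
      (G.delVert v).connectedComponentMk ⟨a, ha⟩ = c →
      ∃ x : {w : V // w ≠ v}, x ∈ c.supp ∧ G.Adj v x.val := by
    intro k
    induction k with
    | zero =>
      intro a p hp ha _
      exact absurd (SimpleGraph.Walk.eq_of_length_eq_zero hp) ha
    | succ k ihk =>
      intro a p hp ha hc
      cases p with
      | nil => exact absurd rfl ha
      | @cons _ b _ hadj q =>
        by_cases hbv : b = v
        · subst hbv
          exact ⟨⟨a, ha⟩, hc, hadj.symm⟩
        · have hadj' : (G.delVert v).Adj ⟨a, ha⟩ ⟨b, hbv⟩ := hadj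
          have hc' : (G.delVert v).connectedComponentMk ⟨b, hbv⟩ = c :=
            (ConnectedComponent.eq.mpr hadj'.symm.reachable).trans hc
          exact ihk b q (by simpa using hp) hbv hc'
  exact key p.length y.val p rfl y.prop (by
    have : (⟨y.val, y.prop⟩ : {w : V // w ≠ v}) = y := rfl
    rw [this]; exact hy)

end Aux

theorem cut_vertex_in_every_connected_forcing_set {V : Type*} [Fintype V]
    (G : SimpleGraph V) (hG : G.Connected) (v : V)
    (h : 3 ≤ Nat.card (G.delVert v).ConnectedComponent ∨
      (Nat.card (G.delVert v).ConnectedComponent = 2 ∧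
        ∀ c : (G.delVert v).ConnectedComponent,
          ¬ ((G.delVert v).induce c.supp).IsPathGraph)) :
    ∀ S : Set V, G.IsConnForcingSet S → v ∈ S := by
  classical
  intro S hS
  by_contra hvS
  obtain ⟨hforce, hconn⟩ := hS
  obtain ⟨s0, hs0⟩ : S.Nonempty := (hforce v).nonempty
  have hs0v : s0 ≠ v := fun hh => hvS (hh ▸ hs0)
  set H := G.delVert v with hH
  set c1 := H.connectedComponentMk ⟨s0, hs0v⟩ with hc1
  have hSc1 : ∀ (a : V) (ha : a ∈ S) (ha' : a ≠ v),
      H.connectedComponentMk ⟨a, ha'⟩ = c1 := by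
    intro a ha ha'
    have hreach : (G.induce S).Reachable ⟨a, ha⟩ ⟨s0, hs0⟩ := hconn.preconnected _ _
    let f : G.induce S →g H :=
      ⟨fun z => ⟨z.val, fun hh => hvS (hh ▸ z.prop)⟩, fun hadj => by exact hadj⟩
    have hmap : H.Reachable ⟨a, ha'⟩ ⟨s0, hs0v⟩ := hreach.map f
    exact ConnectedComponent.eq.mpr hmap
  have comp_adj : ∀ (a b : V) (ha : a ≠ v) (hb : b ≠ v), G.Adj a b →
      H.connectedComponentMk ⟨a, ha⟩ = H.connectedComponentMk ⟨b, hb⟩ := by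
    intro a b ha hb hadj
    have : H.Adj ⟨a, ha⟩ ⟨b, hb⟩ := hadj
    exact ConnectedComponent.eq.mpr this.reachable
  haveI : Fintype H.ConnectedComponent := Fintype.ofFinite _
  rcases h with h3 | ⟨h2, hpath⟩
  · -- at least 3 components
    have hcard : 3 ≤ Fintype.card H.ConnectedComponent := by
      rwa [← Nat.card_eq_fintype_card]
    have herase : 1 < (Finset.univ.erase c1).card := by
      rw [Finset.card_erase_of_mem (Finset.mem_univ c1), ← Finset.card_univ] at *
      omega
    obtain ⟨c2, hc2m, c3, hc3m, hc23⟩ := Finset.one_lt_card.mp herase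
    have hc2ne : c2 ≠ c1 := (Finset.mem_erase.mp hc2m).1
    have hc3ne : c3 ≠ c1 := (Finset.mem_erase.mp hc3m).1
    have key : ∀ z : V, G.Forced S z → ∀ hz : z ≠ v,
        H.connectedComponentMk ⟨z, hz⟩ ≠ c2 ∧ H.connectedComponentMk ⟨z, hz⟩ ≠ c3 := by
      intro z hz
      induction hz with
      | init hv =>
        intro hz
        rw [hSc1 _ hv hz]
        exact ⟨Ne.symm hc2ne, Ne.symm hc3ne⟩
      | @force u z hu hadj hoth ihu ihoth =>
        intro hzv
        by_cases huv : u = v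
        · constructor
          · intro hc2eq
            obtain ⟨x3, hx3supp, hx3adj⟩ := exists_adj_supp hG v c3
            have hx3z : x3.val ≠ z := by
              intro hh
              apply hc23
              have hx3 : (⟨z, hzv⟩ : {w : V // w ≠ v}) = x3 := Subtype.ext hh.symm
              rw [← hc2eq, hx3]
              exact hx3supp
            exact (ihoth x3.val (by rw [huv]; exact hx3adj) hx3z x3.prop).2 hx3supp
          · intro hc3eq
            obtain ⟨x2, hx2supp, hx2adj⟩ := exists_adj_supp hG v c2
            have hx2z : x2.val ≠ z := by
              intro hh
              apply hc23
              have hx2 : (⟨z, hzv⟩ : {w : V // w ≠ v}) = x2 := Subtype.ext hh.symm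
              rw [← hc3eq, hx2]
              exact ((ConnectedComponent.mem_supp_iff _ _).mp hx2supp).symm
            exact (ihoth x2.val (by rw [huv]; exact hx2adj) hx2z x2.prop).1 hx2supp
        · have hcomp := comp_adj u z huv hzv hadj
          exact ⟨fun hh => (ihu huv).1 (hcomp.trans hh),
            fun hh => (ihu huv).2 (hcomp.trans hh)⟩
    obtain ⟨y2, hy2⟩ := c2.exists_rep
    exact (key y2.val (hforce _) y2.prop).1 hy2
  · -- exactly 2 components, none a path
    have hnt : Nontrivial H.ConnectedComponent := by
      apply Fintype.one_lt_card_iff_nontrivial.mp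
      rw [← Nat.card_eq_fintype_card, h2]
      omega
    obtain ⟨c2, hc2ne⟩ := exists_ne c1
    obtain ⟨x2, hx2supp, hx2adj⟩ := exists_adj_supp hG v c2
    have huniq : ∀ (y : V) (hy : y ≠ v), G.Adj v y →
        H.connectedComponentMk ⟨y, hy⟩ = c2 → y = x2.val := by
      by_contra hcon
      push_neg at hcon
      obtain ⟨y, hyv, hyadj, hyc2, hyx2⟩ := hcon
      have key2 : ∀ z : V, G.Forced S z → ∀ hz : z ≠ v,
          H.connectedComponentMk ⟨z, hz⟩ ≠ c2 := by
        intro z hz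
        induction hz with
        | init hv =>
          intro hz
          rw [hSc1 _ hv hz]
          exact Ne.symm hc2ne
        | @force u z hu hadj hoth ihu ihoth =>
          intro hzv
          by_cases huv : u = v
          · intro _
            by_cases hyz : y = z
            · have hx2z : x2.val ≠ z := fun hh => hyx2 (hyz.trans hh.symm)
              exact ihoth x2.val (by rw [huv]; exact hx2adj) hx2z x2.prop hx2supp
            · exact ihoth y (by rw [huv]; exact hyadj) hyz hyv hyc2
          · intro hh
            exact ihu huv ((comp_adj u z huv hzv hadj).trans hh)
      obtain ⟨y2, hy2⟩ := c2.exists_rep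
      exact key2 y2.val (hforce _) y2.prop hy2
    set K := H.induce c2.supp with hK
    set w2 : c2.supp := ⟨x2, hx2supp⟩ with hw2
    have keyC : ∀ z : V, G.Forced S z →
        ∀ (hz : z ≠ v) (hc : (⟨z, hz⟩ : {w : V // w ≠ v}) ∈ c2.supp),
        K.Forced {w2} ⟨⟨z, hz⟩, hc⟩ := by
      intro z hz
      induction hz with
      | init hv =>
        intro hz hc
        exact absurd ((hSc1 _ hv hz).symm.trans
          ((ConnectedComponent.mem_supp_iff _ _).mp hc)) (Ne.symm hc2ne)
      | @force u z hu hadj hoth ihu ihoth =>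
        intro hzv hc
        by_cases huv : u = v
        · have hzx2 : z = x2.val :=
            huniq z hzv (by rw [← huv]; exact hadj) ((ConnectedComponent.mem_supp_iff _ _).mp hc)
          refine Forced.init ?_
          show _ = w2
          exact Subtype.ext (Subtype.ext hzx2)
        · have hcu : (⟨u, huv⟩ : {w : V // w ≠ v}) ∈ c2.supp := by
            rw [ConnectedComponent.mem_supp_iff]
            exact (comp_adj u z huv hzv hadj).trans
              ((ConnectedComponent.mem_supp_iff _ _).mp hc)
          refine Forced.force (u := ⟨⟨u, huv⟩, hcu⟩) (ihu huv hcu) (by exact hadj) ?_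
          intro t ht hne
          have htz : t.val.val ≠ z := by
            intro hh
            exact hne (Subtype.ext (Subtype.ext hh))
          exact ihoth t.val.val (by exact ht) htz t.val.prop t.prop
    have hKf : ∀ t, K.Forced {w2} t := by
      intro t
      have := keyC t.val.val (hforce _) t.val.prop t.prop
      exact this
    haveI : Fintype (c2.supp : Set {w : V // w ≠ v}) := Fintype.ofFinite _
    obtain ⟨e, he⟩ :=
      path_of_forced_singleton (Fintype.card (c2.supp : Set {w : V // w ≠ v})) _ K w2 rfl hKf
    exact hpath c2 ⟨_, ⟨e⟩⟩
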